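/- Let Γ be a group acting on a set M with cut-off function χ, γ ∈ Γ, and let Ψ(c) := f_c be as above, viewed as a map from Lott's complex 𝒞^•_γ(Γ) to the γ-extended Alexander–Spanier complex. Then Ψ is a chain map: Ψ(δc) = ε(Ψ(c)) for all c ∈ 𝒞^k_γ(Γ), where δ is the group cochain differential and ε the extended Alexander–Spanier differential. -/

import Mathlib

/-- Lott's delocalized group cochains. -/
def IsLottCochain {Γ : Type*} [Group Γ] (γ : Γ) (k : ℕ)
    (c : (Fin (k + 1) → Γ) → ℂ) : Prop :=
  (∀ σ : Equiv.Perm (Fin (k + 1)), ∀ g : Fin (k + 1) → Γ,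
      c (g ∘ σ) = ((Equiv.Perm.sign σ : ℤ) : ℂ) * c g) ∧
  (∀ z : Γ, z * γ = γ * z → ∀ g : Fin (k + 1) → Γ, c (fun i => z * g i) = c g) ∧
  (∀ g : Fin (k + 1) → Γ, c (Function.update g 0 (γ * g 0)) = c g)

/-- The simplicial differential on group cochains. -/
noncomputable def lottδ {Γ : Type*} [Group Γ] {k : ℕ} (c : (Fin (k + 1) → Γ) → ℂ) :
    (Fin (k + 2) → Γ) → ℂ :=
  fun g => ∑ i : Fin (k + 2), (-1 : ℂ) ^ (i : ℕ) * c (g ∘ i.succAbove)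

/-- The γ-extended Alexander–Spanier differential. -/
noncomputable def extAS {Γ M : Type*} [Group Γ] [MulAction Γ M] (χ : M → ℂ) {n : ℕ}
    (f : Γ → (Fin (n + 1) → M) → ℂ) : Γ → (Fin (n + 2) → M) → ℂ :=
  fun η xs =>
    (∑ᶠ h : Γ, f (η * h) fun i => xs i.succ) * χ (η⁻¹ • xs 0) +
      ∑ i : Fin (n + 1), (-1 : ℂ) ^ ((i : ℕ) + 1) * f η (xs ∘ (i.succ).succAbove)

/-- The map `Ψ(c) = f_c`. -/
noncomputable def fcMap {Γ M : Type*} [Group Γ] [MulAction Γ M] (χ : M → ℂ) {k : ℕ}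
    (c : (Fin (k + 1) → Γ) → ℂ) : Γ → (Fin (k + 1) → M) → ℂ :=
  fun η xs => ∑ᶠ g : Fin k → Γ,
    c (Fin.cons η g) * χ (η⁻¹ • xs 0) * ∏ i : Fin k, χ ((g i)⁻¹ • xs i.succ)

section Aux

variable {Γ M : Type*} [Group Γ] [MulAction Γ M] {χ : M → ℂ}

/-- Finiteness of the support of a function of a tuple of group elements, each of which is
cut off by `χ`. -/
lemma aux_fin (hχfin : ∀ x : M, (Function.support fun h : Γ => χ (h⁻¹ • x)).Finite)
    {n : ℕ} (zs : Fin n → M) (f : (Fin n → Γ) → ℂ)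
    (hf : ∀ g, f g ≠ 0 → ∀ j, χ ((g j)⁻¹ • zs j) ≠ 0) :
    (Function.support f).Finite := by
  refine (Set.Finite.pi fun j => hχfin (zs j)).subset ?_
  intro g hg j _
  exact hf g hg j

/-- Finiteness for a single cut-off variable. -/
lemma aux_one (hχfin : ∀ x : M, (Function.support fun h : Γ => χ (h⁻¹ • x)).Finite)
    (x : M) (f : Γ → ℂ) (hf : ∀ h, f h ≠ 0 → χ (h⁻¹ • x) ≠ 0) :
    (Function.support f).Finite :=
  (hχfin x).subset fun h hh => hf h hh

/-- Finiteness for a pair of a cut-off variable and a cut-off tuple. -/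
lemma aux_pair (hχfin : ∀ x : M, (Function.support fun h : Γ => χ (h⁻¹ • x)).Finite)
    (x : M) {n : ℕ} (zs : Fin n → M) (f : Γ × (Fin n → Γ) → ℂ)
    (hf : ∀ p, f p ≠ 0 → χ (p.1⁻¹ • x) ≠ 0 ∧ ∀ j, χ ((p.2 j)⁻¹ • zs j) ≠ 0) :
    (Function.support f).Finite := by
  refine (Set.Finite.prod (hχfin x) (Set.Finite.pi fun j => hχfin (zs j))).subset ?_
  rintro ⟨h, g⟩ hp
  obtain ⟨h1, h2⟩ := hf _ hp
  exact ⟨h1, fun j _ => h2 j⟩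

end Aux

/-- `Ψ` is a chain map from Lott's complex to the γ-extended Alexander–Spanier complex:
`Ψ(δc) = ε(Ψ(c))`. -/
theorem Psi_chain_map (Γ M : Type*) [Group Γ] [MulAction Γ M] (γ : Γ) (χ : M → ℂ)
    (hχfin : ∀ x : M, (Function.support fun h : Γ => χ (h⁻¹ • x)).Finite)
    (hχsum : ∀ x : M, ∑ᶠ h : Γ, χ (h⁻¹ • x) = 1)
    (k : ℕ) (c : (Fin (k + 1) → Γ) → ℂ) (hc : IsLottCochain γ k c) :
    fcMap χ (lottδ c) = extAS χ (fcMap χ c) := by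
  classical
  funext η xs
  -- the i-th face terms for i ≥ 1
  have key : ∀ i : Fin (k + 1),
      (∑ᶠ g : Fin (k + 1) → Γ, c (Fin.cons η (g ∘ i.succAbove)) * χ (η⁻¹ • xs 0) *
          ∏ j : Fin (k + 1), χ ((g j)⁻¹ • xs j.succ))
        = fcMap χ c η (xs ∘ (i.succ).succAbove) := by
    intro i
    have h1 : (∑ᶠ g : Fin (k + 1) → Γ, c (Fin.cons η (g ∘ i.succAbove)) * χ (η⁻¹ • xs 0) *
          ∏ j : Fin (k + 1), χ ((g j)⁻¹ • xs j.succ))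
        = ∑ᶠ p : Γ × (Fin k → Γ),
            χ (p.1⁻¹ • xs i.succ) *
              (c (Fin.cons η p.2) * χ (η⁻¹ • xs 0) *
                ∏ j : Fin k, χ ((p.2 j)⁻¹ • xs (i.succAbove j).succ)) := by
      rw [← finsum_comp_equiv (Fin.insertNthEquiv (fun _ : Fin (k + 1) => Γ) i)]
      refine finsum_congr fun p => ?_
      obtain ⟨a, g'⟩ := p
      have hcomp : (Fin.insertNthEquiv (fun _ : Fin (k + 1) => Γ) i) (a, g') ∘ i.succAbove
          = g' := by
        funext j
        simp [Fin.insertNthEquiv]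
      have hprod : (∏ j : Fin (k + 1),
            χ (((Fin.insertNthEquiv (fun _ : Fin (k + 1) => Γ) i) (a, g') j)⁻¹ • xs j.succ))
          = χ (a⁻¹ • xs i.succ) *
              ∏ j : Fin k, χ ((g' j)⁻¹ • xs (i.succAbove j).succ) := by
        rw [Fin.prod_univ_succAbove
          (fun j => χ (((Fin.insertNthEquiv (fun _ : Fin (k + 1) => Γ) i) (a, g') j)⁻¹
            • xs j.succ)) i]
        simp [Fin.insertNthEquiv]
      rw [hcomp, hprod]
      ring
    rw [h1]
    have hsupp : (Function.support fun p : Γ × (Fin k → Γ) =>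
        χ (p.1⁻¹ • xs i.succ) *
          (c (Fin.cons η p.2) * χ (η⁻¹ • xs 0) *
            ∏ j : Fin k, χ ((p.2 j)⁻¹ • xs (i.succAbove j).succ))).Finite := by
      refine aux_pair hχfin (xs i.succ) (fun j => xs (i.succAbove j).succ) _ ?_
      intro p hp
      constructor
      · intro h0
        exact hp (by rw [h0, zero_mul])
      · intro j h0
        refine hp ?_
        have h0' : χ ((p.2 j)⁻¹ • xs (i.succAbove j).succ) = 0 := h0
        rw [Finset.prod_eq_zero (Finset.mem_univ j) h0']
        ring
    rw [finsum_curry _ hsupp]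
    have h2 : ∀ a : Γ,
        (∑ᶠ g' : Fin k → Γ,
          χ (a⁻¹ • xs i.succ) *
            (c (Fin.cons η g') * χ (η⁻¹ • xs 0) *
              ∏ j : Fin k, χ ((g' j)⁻¹ • xs (i.succAbove j).succ)))
        = χ (a⁻¹ • xs i.succ) *
            ∑ᶠ g' : Fin k → Γ,
              c (Fin.cons η g') * χ (η⁻¹ • xs 0) *
                ∏ j : Fin k, χ ((g' j)⁻¹ • xs (i.succAbove j).succ) := by
      intro a
      rw [mul_finsum]
    simp only [h2]
    rw [← finsum_mul, hχsum, one_mul]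
    -- identify with fcMap applied to the degenerate tuple
    rw [fcMap]
    refine finsum_congr fun g' => ?_
    have hx0 : (xs ∘ (i.succ).succAbove) 0 = xs 0 := by
      simp [Fin.succ_succAbove_zero]
    have hxs : ∀ j : Fin k, (xs ∘ (i.succ).succAbove) j.succ = xs (i.succAbove j).succ := by
      intro j
      simp [Fin.succ_succAbove_succ]
    rw [hx0]
    congr 1
    exact Finset.prod_congr rfl fun j _ => by rw [hxs j]
  -- the 0-th face term
  have key0 :
      (∑ᶠ g : Fin (k + 1) → Γ, c g * χ (η⁻¹ • xs 0) *
          ∏ j : Fin (k + 1), χ ((g j)⁻¹ • xs j.succ))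
        = (∑ᶠ h : Γ, fcMap χ c (η * h) fun i => xs i.succ) * χ (η⁻¹ • xs 0) := by
    have hη : ∀ h : Γ, (η * h)⁻¹ • xs 1 = h⁻¹ • η⁻¹ • xs 1 := by
      intro h; rw [mul_inv_rev, mul_smul]
    -- rewrite fcMap at η * h
    have hfc : ∀ h : Γ,
        fcMap χ c (η * h) (fun i => xs i.succ) * χ (η⁻¹ • xs 0)
          = ∑ᶠ g' : Fin k → Γ,
              c (Fin.cons (η * h) g') * χ ((η * h)⁻¹ • xs 1) *
                (∏ j : Fin k, χ ((g' j)⁻¹ • xs j.succ.succ)) * χ (η⁻¹ • xs 0) := by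
      intro h
      rw [fcMap]
      have heq : ∀ g' : Fin k → Γ,
          c (Fin.cons (η * h) g') * χ ((η * h)⁻¹ • (fun i : Fin (k + 1) => xs i.succ) 0) *
              ∏ j : Fin k, χ ((g' j)⁻¹ • (fun i : Fin (k + 1) => xs i.succ) j.succ)
            = c (Fin.cons (η * h) g') * χ ((η * h)⁻¹ • xs 1) *
                ∏ j : Fin k, χ ((g' j)⁻¹ • xs j.succ.succ) := by
        intro g'
        simp [Fin.succ_zero_eq_one]
      rw [finsum_congr heq, finsum_mul]
    rw [finsum_mul]
    simp only [hfc]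
    -- combine into a single finsum over pairs and change variables
    have hsupp : (Function.support fun p : Γ × (Fin k → Γ) =>
        c (Fin.cons (η * p.1) p.2) * χ ((η * p.1)⁻¹ • xs 1) *
          (∏ j : Fin k, χ ((p.2 j)⁻¹ • xs j.succ.succ)) * χ (η⁻¹ • xs 0)).Finite := by
      refine aux_pair hχfin (η⁻¹ • xs 1) (fun j => xs j.succ.succ) _ ?_
      intro p hp
      constructor
      · intro h0
        refine hp ?_
        rw [← hη p.1] at h0
        rw [h0]
        ring
      · intro j h0
        refine hp ?_
        have h0' : χ ((p.2 j)⁻¹ • xs j.succ.succ) = 0 := h0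
        rw [Finset.prod_eq_zero (Finset.mem_univ j) h0']
        ring
    rw [← finsum_curry _ hsupp]
    rw [← finsum_comp_equiv
      ((Equiv.prodCongr (Equiv.mulLeft η) (Equiv.refl (Fin k → Γ))).trans
        (Fin.consEquiv fun _ : Fin (k + 1) => Γ))
      (f := fun g : Fin (k + 1) → Γ => c g * χ (η⁻¹ • xs 0) *
        ∏ j : Fin (k + 1), χ ((g j)⁻¹ • xs j.succ))]
    refine finsum_congr fun p => ?_
    obtain ⟨h, g'⟩ := p
    have he : ((Equiv.prodCongr (Equiv.mulLeft η) (Equiv.refl (Fin k → Γ))).trans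
        (Fin.consEquiv fun _ : Fin (k + 1) => Γ)) (h, g') = Fin.cons (η * h) g' := by
      simp [Fin.consEquiv]
    rw [he]
    have hPc : (∏ j : Fin (k + 1),
          χ (((Fin.cons (η * h) g' : Fin (k + 1) → Γ) j)⁻¹ • xs j.succ))
        = χ ((η * h)⁻¹ • xs 1) * ∏ j : Fin k, χ ((g' j)⁻¹ • xs j.succ.succ) := by
      rw [Fin.prod_univ_succ]
      simp [Fin.succ_zero_eq_one]
    rw [hPc]
    ring
  -- assemble
  show (∑ᶠ g : Fin (k + 1) → Γ,
      lottδ c (Fin.cons η g) * χ (η⁻¹ • xs 0) *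
        ∏ j : Fin (k + 1), χ ((g j)⁻¹ • xs j.succ))
    = _
  have expand : ∀ g : Fin (k + 1) → Γ,
      lottδ c (Fin.cons η g) * χ (η⁻¹ • xs 0) *
          ∏ j : Fin (k + 1), χ ((g j)⁻¹ • xs j.succ)
        = ∑ i : Fin (k + 2),
            (-1 : ℂ) ^ (i : ℕ) * (c (Fin.cons η g ∘ i.succAbove) * χ (η⁻¹ • xs 0) *
              ∏ j : Fin (k + 1), χ ((g j)⁻¹ • xs j.succ)) := by
    intro g
    rw [lottδ, Finset.sum_mul, Finset.sum_mul]
    refine Finset.sum_congr rfl fun i _ => ?_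
    ring
  calc
    (∑ᶠ g : Fin (k + 1) → Γ,
        lottδ c (Fin.cons η g) * χ (η⁻¹ • xs 0) *
          ∏ j : Fin (k + 1), χ ((g j)⁻¹ • xs j.succ))
      = ∑ᶠ g : Fin (k + 1) → Γ, ∑ i : Fin (k + 2),
          (-1 : ℂ) ^ (i : ℕ) * (c (Fin.cons η g ∘ i.succAbove) * χ (η⁻¹ • xs 0) *
            ∏ j : Fin (k + 1), χ ((g j)⁻¹ • xs j.succ)) :=
        finsum_congr expand
    _ = ∑ i : Fin (k + 2), ∑ᶠ g : Fin (k + 1) → Γ,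
          (-1 : ℂ) ^ (i : ℕ) * (c (Fin.cons η g ∘ i.succAbove) * χ (η⁻¹ • xs 0) *
            ∏ j : Fin (k + 1), χ ((g j)⁻¹ • xs j.succ)) := by
        refine finsum_sum_comm _ _ fun i _ => ?_
        refine aux_fin hχfin (fun j => xs j.succ) _ ?_
        intro g hg j h0
        refine hg ?_
        have h0' : χ ((g j)⁻¹ • xs j.succ) = 0 := h0
        rw [Finset.prod_eq_zero (Finset.mem_univ j) h0']
        ring
    _ = ∑ i : Fin (k + 2), (-1 : ℂ) ^ (i : ℕ) *
          ∑ᶠ g : Fin (k + 1) → Γ, c (Fin.cons η g ∘ i.succAbove) * χ (η⁻¹ • xs 0) *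
            ∏ j : Fin (k + 1), χ ((g j)⁻¹ • xs j.succ) := by
        refine Finset.sum_congr rfl fun i _ => ?_
        rw [mul_finsum]
    _ = (∑ᶠ h : Γ, fcMap χ c (η * h) fun i => xs i.succ) * χ (η⁻¹ • xs 0) +
          ∑ i : Fin (k + 1), (-1 : ℂ) ^ ((i : ℕ) + 1) *
            fcMap χ c η (xs ∘ (i.succ).succAbove) := by
        rw [Fin.sum_univ_succ]
        congr 1
        · have h0 : ∀ g : Fin (k + 1) → Γ,
              Fin.cons η g ∘ (0 : Fin (k + 2)).succAbove = g := by
            intro g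
            funext j
            simp [Fin.succAbove_zero]
          simp only [Fin.val_zero, pow_zero, one_mul]
          rw [finsum_congr fun g => by rw [h0 g], key0]
        · refine Finset.sum_congr rfl fun i _ => ?_
          have hcons : ∀ g : Fin (k + 1) → Γ,
              Fin.cons η g ∘ (i.succ).succAbove = Fin.cons η (g ∘ i.succAbove) := by
            intro g
            funext j
            refine Fin.cases ?_ (fun j' => ?_) j
            · simp [Fin.succ_succAbove_zero]
            · simp [Fin.succ_succAbove_succ]
          rw [finsum_congr fun g => by rw [hcons g], key i, Fin.val_succ]
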